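/- Let K be a field of characteristic 0, (R, 𝔪) a parameter K-algebra, and C a smooth integral commutative K-algebra. Let (A, {−,−}, π) be a Poisson R-deformation of C. Then there is an R-algebra isomorphism φ from the 𝔪-adic completion lim_i ((R/𝔪^{i+1}) ⊗_K C) of R ⊗_K C onto A such that π ∘ φ equals the canonical augmentation of the completion (the map induced by r ⊗ c ↦ (r mod 𝔪)·c). -/

import Mathlib

open IsLocalRing TensorProduct

variable (K : Type) [Field K]
variable (R : Type) [CommRing R] [Algebra K R] [IsLocalRing R]
variable (C : Type) [CommRing C] [Algebra K C]

/-- The level-`i` piece `(R/𝔪^{i+1}) ⊗_K C` of the `𝔪`-adic completion of `R ⊗_K C`. -/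
abbrev TensorLevel (i : ℕ) : Type := (R ⧸ (maximalIdeal R ^ (i + 1))) ⊗[K] C

/-- The transition homomorphism `(R/𝔪^{i+2}) ⊗_K C → (R/𝔪^{i+1}) ⊗_K C`. -/
noncomputable def tensorTransition (i : ℕ) :
    TensorLevel K R C (i + 1) →ₐ[K] TensorLevel K R C i :=
  Algebra.TensorProduct.map
    (Ideal.Quotient.liftₐ (maximalIdeal R ^ (i + 1 + 1))
      (Ideal.Quotient.mkₐ K (maximalIdeal R ^ (i + 1)))
      (fun a ha => by
        rw [Ideal.Quotient.mkₐ_eq_mk, Ideal.Quotient.eq_zero_iff_mem]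
        exact Ideal.pow_le_pow_right (Nat.le_succ _) ha))
    (AlgHom.id K C)

@[simp] lemma tensorTransition_tmul (i : ℕ) (r : R) (c : C) :
    tensorTransition K R C i
        ((Ideal.Quotient.mk (maximalIdeal R ^ (i + 1 + 1)) r) ⊗ₜ[K] c)
      = (Ideal.Quotient.mk (maximalIdeal R ^ (i + 1)) r) ⊗ₜ[K] c := by
  simp [tensorTransition]
  first | rfl | simp [Ideal.Quotient.lift_mk]

/-- The `𝔪`-adic completion `lim_i (R/𝔪^{i+1}) ⊗_K C` of `R ⊗_K C`, realized as the
`K`-subalgebra of compatible sequences in the product of the `(R/𝔪^{i+1}) ⊗_K C`. -/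
noncomputable def tensorLimit : Subalgebra K (∀ i, TensorLevel K R C i) where
  carrier := {f | ∀ i, tensorTransition K R C i (f (i + 1)) = f i}
  mul_mem' := by
    intro a b ha hb i
    simp only [Pi.mul_apply, map_mul]
    rw [ha i, hb i]
  add_mem' := by
    intro a b ha hb i
    simp only [Pi.add_apply, map_add]
    rw [ha i, hb i]
  one_mem' := by
    intro i
    simp only [Pi.one_apply, map_one]
  zero_mem' := by
    intro i
    simp only [Pi.zero_apply, map_zero]
  algebraMap_mem' := by
    intro k i
    simp only [Pi.algebraMap_apply, AlgHom.commutes]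

/-- The structural ring homomorphism `R → lim_i (R/𝔪^{i+1}) ⊗_K C`,
`r ↦ (r mod 𝔪^{i+1}) ⊗ 1`. -/
noncomputable def tensorLimitStruct : R →+* ↥(tensorLimit K R C) where
  toFun r := ⟨fun i => (Ideal.Quotient.mk (maximalIdeal R ^ (i + 1)) r) ⊗ₜ[K] (1 : C),
    fun i => tensorTransition_tmul K R C i r 1⟩
  map_one' := by
    apply Subtype.ext
    funext i
    simp [Algebra.TensorProduct.one_def]
  map_mul' r r' := by
    apply Subtype.ext
    funext i
    simp [Algebra.TensorProduct.tmul_mul_tmul]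
  map_zero' := by
    apply Subtype.ext
    funext i
    simp
  map_add' r r' := by
    apply Subtype.ext
    funext i
    simp [TensorProduct.add_tmul]

/-- The residue homomorphism `R → K → C` (using `R/𝔪 = K`), as a `K`-algebra homomorphism. -/
noncomputable def resHom
    (hres : Function.Bijective (algebraMap K (R ⧸ maximalIdeal R))) : R →ₐ[K] C where
  toRingHom := (algebraMap K C).comp
    (((RingEquiv.ofBijective (algebraMap K (R ⧸ maximalIdeal R)) hres).symm :
        (R ⧸ maximalIdeal R) →+* K).comp
      (Ideal.Quotient.mk (maximalIdeal R)))
  commutes' := fun k => by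
    show (algebraMap K C) ((RingEquiv.ofBijective (algebraMap K (R ⧸ maximalIdeal R)) hres).symm
        ((Ideal.Quotient.mk (maximalIdeal R)) (algebraMap K R k))) = algebraMap K C k
    have h1 : (Ideal.Quotient.mk (maximalIdeal R)) (algebraMap K R k)
        = algebraMap K (R ⧸ maximalIdeal R) k := by
      rw [← Ideal.Quotient.algebraMap_eq, ← IsScalarTower.algebraMap_apply]
    rw [h1]
    have h2 : (RingEquiv.ofBijective (algebraMap K (R ⧸ maximalIdeal R)) hres).symm
        (algebraMap K (R ⧸ maximalIdeal R) k) = k :=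
      (RingEquiv.ofBijective (algebraMap K (R ⧸ maximalIdeal R)) hres).symm_apply_apply k
    rw [h2]

/-- The canonical augmentation `(R/𝔪^{0+1}) ⊗_K C → C` induced by `r ⊗ c ↦ (r mod 𝔪)·c`,
using the identification `R/𝔪 = K`. -/
noncomputable def tensorAug
    (hres : Function.Bijective (algebraMap K (R ⧸ maximalIdeal R))) :
    TensorLevel K R C 0 →ₐ[K] C :=
  Algebra.TensorProduct.productMap
    (Ideal.Quotient.liftₐ (maximalIdeal R ^ (0 + 1)) (resHom K R C hres)
      (fun a ha => by
        have haa : a ∈ maximalIdeal R := by rwa [pow_one] at ha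
        show (algebraMap K C) ((RingEquiv.ofBijective (algebraMap K (R ⧸ maximalIdeal R))
            hres).symm ((Ideal.Quotient.mk (maximalIdeal R)) a)) = 0
        rw [Ideal.Quotient.eq_zero_iff_mem.mpr haa]
        simp))
    (AlgHom.id K C)


set_option linter.unusedSectionVars false
set_option maxHeartbeats 4000000

section Aux
variable (A : Type) [CommRing A] [Algebra K A] [Algebra R A] [IsScalarTower K R A]

noncomputable def Jid (i : ℕ) : Ideal A := (maximalIdeal R ^ (i + 1)).map (algebraMap R A)

lemma Jid_le (i : ℕ) : Jid R A (i + 1) ≤ Jid R A i :=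
  Ideal.map_mono (Ideal.pow_le_pow_right (by omega))

noncomputable def mkB (i : ℕ) : A →ₐ[K] A ⧸ Jid R A i := Ideal.Quotient.mkₐ K _

noncomputable def trB (i : ℕ) : (A ⧸ Jid R A (i+1)) →ₐ[K] (A ⧸ Jid R A i) :=
  Ideal.Quotient.liftₐ _ (mkB K R A i) (fun a ha => by
    simpa [mkB, Ideal.Quotient.eq_zero_iff_mem] using Jid_le R A i ha)

@[simp] lemma trB_mk (i : ℕ) (a : A) : trB K R A i (mkB K R A (i+1) a) = mkB K R A i a := by
  simp [trB, mkB]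
  rfl

lemma mem_Jid_iff (i : ℕ) (a : A) :
    a ∈ Jid R A i ↔ a ∈ (maximalIdeal R ^ (i+1) • ⊤ : Submodule R A) := by
  rw [Ideal.smul_top_eq_map]; rfl

lemma unique_of_mkB (hH : IsHausdorff (maximalIdeal R) A) {a a' : A}
    (h : ∀ i, mkB K R A i a = mkB K R A i a') : a = a' := by
  rw [← sub_eq_zero]
  refine hH.haus _ (fun n => ?_)
  cases n with
  | zero =>
    rw [pow_zero, Ideal.one_eq_top, Submodule.top_smul]
    exact SModEq.top
  | succ k =>
    rw [SModEq.zero]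
    exact (mem_Jid_iff R A k _).mp (Ideal.Quotient.eq.mp (h k))

lemma mkB_compat (b : ∀ i, A ⧸ Jid R A i) (hb : ∀ i, trB K R A i (b (i+1)) = b i) :
    ∀ m n, n ≤ m → ∀ a : A, mkB K R A m a = b m → mkB K R A n a = b n := by
  intro m
  induction m with
  | zero =>
    intro n hn a ha
    obtain rfl : n = 0 := Nat.le_zero.mp hn
    exact ha
  | succ k ih =>
    intro n hn a ha
    rcases Nat.lt_or_ge n (k+1) with h | h
    · apply ih n (by omega)
      have := congrArg (trB K R A k) ha
      rwa [trB_mk, hb] at this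
    · obtain rfl : n = k + 1 := by omega
      exact ha

lemma glue_exists (hA : IsAdicComplete (maximalIdeal R) A)
    (b : ∀ i, A ⧸ Jid R A i) (hb : ∀ i, trB K R A i (b (i+1)) = b i) :
    ∃ a : A, ∀ i, mkB K R A i a = b i := by
  have hsurj : ∀ i, ∃ a, mkB K R A i a = b i := fun i => Ideal.Quotient.mk_surjective (b i)
  choose ℓ hℓ using hsurj
  have key : ∀ {m n : ℕ}, m ≤ n →
      ℓ m ≡ ℓ n [SMOD (maximalIdeal R ^ m • ⊤ : Submodule R A)] := by
    intro m n hmn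
    cases m with
    | zero =>
      rw [pow_zero, Ideal.one_eq_top, Submodule.top_smul]
      exact SModEq.top
    | succ k =>
      rw [SModEq.sub_mem, ← mem_Jid_iff]
      have h1 : mkB K R A k (ℓ (k+1)) = b k :=
        mkB_compat K R A b hb (k+1) k (by omega) _ (hℓ _)
      have h2 : mkB K R A k (ℓ n) = b k :=
        mkB_compat K R A b hb n k (by omega) _ (hℓ _)
      exact Ideal.Quotient.eq.mp (h1.trans h2.symm)
  obtain ⟨L, hL⟩ := hA.toIsPrecomplete.prec key
  refine ⟨L, fun i => ?_⟩
  have := hL (i+1)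
  rw [SModEq.sub_mem, ← mem_Jid_iff] at this
  have : mkB K R A i (ℓ (i+1)) = mkB K R A i L := Ideal.Quotient.eq.mpr this
  rw [← this]
  exact mkB_compat K R A b hb (i+1) i (by omega) _ (hℓ _)


-- square-zero property of the kernel of the transition
lemma Jid_sq (i : ℕ) :
    ((Jid R A i).map (Ideal.Quotient.mkₐ K (Jid R A (i+1)))) ^ 2 = ⊥ := by
  rw [← Ideal.map_pow]
  rw [← le_bot_iff]
  have h1 : (Jid R A i) ^ 2 ≤ Jid R A (i+1) := by
    unfold Jid
    rw [← Ideal.map_pow, ← pow_mul]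
    exact Ideal.map_mono (Ideal.pow_le_pow_right (by omega))
  calc ((Jid R A i) ^ 2).map (Ideal.Quotient.mkₐ K (Jid R A (i+1)))
      ≤ (Jid R A (i+1)).map (Ideal.Quotient.mkₐ K (Jid R A (i+1))) := Ideal.map_mono h1
    _ = ⊥ := by
        rw [show (Ideal.map (Ideal.Quotient.mkₐ K (Jid R A (i+1))) (Jid R A (i+1)))
            = Ideal.map (Ideal.Quotient.mk (Jid R A (i+1))) (Jid R A (i+1)) from rfl,
          Ideal.map_quotient_self]

variable {A}
variable [Algebra.FormallySmooth K C]

/-- tower of lifts of a given algebra map `C →ₐ Bq 0`. -/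
noncomputable def sigmaTower (σ₀ : C →ₐ[K] A ⧸ Jid R A 0) : ∀ i, C →ₐ[K] A ⧸ Jid R A i
  | 0 => σ₀
  | (i+1) =>
    Algebra.FormallySmooth.lift ((Jid R A i).map (Ideal.Quotient.mkₐ K (Jid R A (i+1))))
      (show IsNilpotent _ from ⟨2, Jid_sq K R A i⟩)
      ((DoubleQuot.quotQuotEquivQuotOfLEₐ K (Jid_le R A i)).symm.toAlgHom.comp
        (sigmaTower σ₀ i))

lemma quotQuot_trB (i : ℕ) (x : A ⧸ Jid R A (i+1)) :
    (DoubleQuot.quotQuotEquivQuotOfLEₐ K (Jid_le R A i))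
      ((Ideal.Quotient.mk ((Jid R A i).map (Ideal.Quotient.mkₐ K (Jid R A (i+1))))) x)
    = trB K R A i x := by
  obtain ⟨a, rfl⟩ := Ideal.Quotient.mk_surjective x
  have : (Ideal.Quotient.mk ((Jid R A i).map (Ideal.Quotient.mkₐ K (Jid R A (i+1)))))
      ((Ideal.Quotient.mk (Jid R A (i+1))) a)
      = DoubleQuot.quotQuotMk (Jid R A (i+1)) (Jid R A i) a := rfl
  show (DoubleQuot.quotQuotEquivQuotOfLEₐ K (Jid_le R A i))
      ((Ideal.Quotient.mk _) ((Ideal.Quotient.mk (Jid R A (i+1))) a)) = _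
  rw [this]
  have h2 : (DoubleQuot.quotQuotEquivQuotOfLEₐ K (Jid_le R A i))
      (DoubleQuot.quotQuotMk (Jid R A (i+1)) (Jid R A i) a)
      = (Ideal.Quotient.mk (Jid R A i)) a :=
    DoubleQuot.quotQuotEquivQuotOfLE_quotQuotMk a (Jid_le R A i)
  rw [h2]
  simp [trB, mkB]
  rfl

lemma sigmaTower_compat (σ₀ : C →ₐ[K] A ⧸ Jid R A 0) (i : ℕ) (c : C) :
    trB K R A i (sigmaTower K R C σ₀ (i+1) c) = sigmaTower K R C σ₀ i c := by
  rw [← quotQuot_trB]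
  show (DoubleQuot.quotQuotEquivQuotOfLEₐ K (Jid_le R A i))
    ((Ideal.Quotient.mk _)
      (Algebra.FormallySmooth.lift ((Jid R A i).map (Ideal.Quotient.mkₐ K (Jid R A (i+1))))
        _
        ((DoubleQuot.quotQuotEquivQuotOfLEₐ K (Jid_le R A i)).symm.toAlgHom.comp
          (sigmaTower K R C σ₀ i)) c)) = _
  rw [Algebra.FormallySmooth.mk_lift]
  simp
  exact RingEquiv.apply_symm_apply _ _

end Aux

section Aux2
variable (A : Type) [CommRing A] [Algebra K A] [Algebra R A] [IsScalarTower K R A]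

noncomputable def qmap (i : ℕ) : (R ⧸ maximalIdeal R ^ (i+1)) →ₐ[K] A ⧸ Jid R A i :=
  Ideal.Quotient.liftₐ _ ((mkB K R A i).comp (IsScalarTower.toAlgHom K R A))
    (fun r hr => by
      show mkB K R A i (algebraMap R A r) = 0
      simp only [mkB, Ideal.Quotient.mkₐ_eq_mk, Ideal.Quotient.eq_zero_iff_mem]
      exact Ideal.mem_map_of_mem _ hr)

@[simp] lemma qmap_mk (i : ℕ) (r : R) :
    qmap K R A i (Ideal.Quotient.mk (maximalIdeal R ^ (i+1)) r)
      = mkB K R A i (algebraMap R A r) := by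
  simp [qmap, mkB]
  rfl

noncomputable def Phi (σs : ∀ i, C →ₐ[K] A ⧸ Jid R A i) (i : ℕ) :
    TensorLevel K R C i →ₐ[K] A ⧸ Jid R A i :=
  Algebra.TensorProduct.productMap (qmap K R A i) (σs i)

@[simp] lemma Phi_tmul (σs : ∀ i, C →ₐ[K] A ⧸ Jid R A i) (i : ℕ) (r : R) (c : C) :
    Phi K R C A σs i ((Ideal.Quotient.mk (maximalIdeal R ^ (i+1)) r) ⊗ₜ[K] c)
      = mkB K R A i (algebraMap R A r) * σs i c := by
  simp [Phi]

lemma Phi_square (σs : ∀ i, C →ₐ[K] A ⧸ Jid R A i)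
    (hσ : ∀ i c, trB K R A i (σs (i+1) c) = σs i c) (i : ℕ)
    (x : TensorLevel K R C (i+1)) :
    trB K R A i (Phi K R C A σs (i+1) x) = Phi K R C A σs i (tensorTransition K R C i x) := by
  induction x using TensorProduct.induction_on with
  | zero => simp
  | tmul w c =>
    obtain ⟨r, rfl⟩ := Ideal.Quotient.mk_surjective w
    rw [Phi_tmul, map_mul, trB_mk, hσ, tensorTransition_tmul, Phi_tmul]
  | add x y hx hy => simp only [map_add, hx, hy]

lemma sup_pow_top (N : Submodule R A) (h1 : N ⊔ (maximalIdeal R • ⊤ : Submodule R A) = ⊤) :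
    ∀ k : ℕ, N ⊔ ((maximalIdeal R ^ (k+1)) • ⊤ : Submodule R A) = ⊤ := by
  intro k
  induction k with
  | zero => rw [pow_one]; exact h1
  | succ k ih =>
    apply le_antisymm le_top
    have h2 : ((maximalIdeal R ^ (k+1)) • ⊤ : Submodule R A)
        = (maximalIdeal R ^ (k+1)) • N ⊔ (maximalIdeal R ^ (k+1+1)) • ⊤ := by
      conv_lhs => rw [← h1]
      rw [Submodule.smul_sup]
      congr 1
      rw [← Submodule.smul_assoc, Ideal.smul_eq_mul, ← pow_succ]
    calc (⊤ : Submodule R A) = N ⊔ (maximalIdeal R ^ (k+1)) • ⊤ := ih.symm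
      _ = N ⊔ ((maximalIdeal R ^ (k+1)) • N ⊔ (maximalIdeal R ^ (k+1+1)) • ⊤) := by rw [h2]
      _ ≤ N ⊔ (maximalIdeal R ^ (k+1+1)) • ⊤ :=
          sup_le le_sup_left
            (sup_le (le_trans Submodule.smul_le_right le_sup_left) le_sup_right)

lemma Phi_surjective (σs : ∀ i, C →ₐ[K] A ⧸ Jid R A i)
    (π : A →ₐ[K] C)
    (hker : ∀ a : A, π a = 0 ↔ a ∈ (maximalIdeal R • ⊤ : Submodule R A))
    (hs : ∀ i c (a : A), mkB K R A i a = σs i c → π a = c)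
    (i : ℕ) : Function.Surjective (Phi K R C A σs i) := by
  have hsec : ∀ c : C, ∃ a : A, mkB K R A i a = σs i c :=
    fun c => Ideal.Quotient.mk_surjective _
  choose s hsc using hsec
  set N : Submodule R A := Submodule.span R (Set.range s) with hN
  have h1 : N ⊔ (maximalIdeal R • ⊤ : Submodule R A) = ⊤ := by
    apply le_antisymm le_top
    intro a _
    refine Submodule.mem_sup.mpr
      ⟨s (π a), Submodule.subset_span ⟨π a, rfl⟩, a - s (π a), ?_, by ring⟩
    apply (hker _).1
    rw [map_sub, hs i (π a) _ (hsc _), sub_self]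
  have h2 := sup_pow_top R A N h1 i
  have hhit : ∀ n ∈ N, ∃ t, Phi K R C A σs i t = mkB K R A i n := by
    intro n hn
    induction hn using Submodule.span_induction with
    | mem x hx =>
      obtain ⟨c, rfl⟩ := hx
      refine ⟨(Ideal.Quotient.mk (maximalIdeal R ^ (i+1)) 1) ⊗ₜ[K] c, ?_⟩
      rw [Phi_tmul]
      simp [hsc c]
    | zero => exact ⟨0, by simp⟩
    | add x y hx hy ihx ihy =>
      obtain ⟨t, ht⟩ := ihx
      obtain ⟨t', ht'⟩ := ihy
      exact ⟨t + t', by rw [map_add, map_add, ht, ht']⟩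
    | smul r x hx ih =>
      obtain ⟨t, ht⟩ := ih
      refine ⟨((Ideal.Quotient.mk (maximalIdeal R ^ (i+1)) r) ⊗ₜ[K] (1 : C)) * t, ?_⟩
      rw [map_mul, Phi_tmul, ht, map_one, mul_one, ← map_mul, ← Algebra.smul_def]
  intro b
  obtain ⟨a, rfl⟩ : ∃ a, mkB K R A i a = b := Ideal.Quotient.mk_surjective b
  have ha : a ∈ N ⊔ ((maximalIdeal R ^ (i+1)) • ⊤ : Submodule R A) := by
    rw [h2]; exact Submodule.mem_top
  obtain ⟨n, hn, m, hm, rfl⟩ := Submodule.mem_sup.mp ha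
  obtain ⟨t, ht⟩ := hhit n hn
  refine ⟨t, ?_⟩
  rw [ht, map_add]
  have : mkB K R A i m = 0 := by
    simp only [mkB, Ideal.Quotient.mkₐ_eq_mk, Ideal.Quotient.eq_zero_iff_mem]
    exact (mem_Jid_iff R A i m).mpr hm
  rw [this, add_zero]

end Aux2

section Aux3
variable (A : Type) [CommRing A] [Algebra K A] [Algebra R A] [IsScalarTower K R A]

/-- The residue scalar of `r : R`, via `R/𝔪 = K`. -/
noncomputable def kres (hres : Function.Bijective (algebraMap K (R ⧸ maximalIdeal R)))
    (r : R) : K :=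
  (RingEquiv.ofBijective (algebraMap K (R ⧸ maximalIdeal R)) hres).symm
    (Ideal.Quotient.mk (maximalIdeal R) r)

lemma mk_kres (hres : Function.Bijective (algebraMap K (R ⧸ maximalIdeal R))) (r : R) :
    Ideal.Quotient.mk (maximalIdeal R) (algebraMap K R (kres K R hres r))
      = Ideal.Quotient.mk (maximalIdeal R) r := by
  have h1 : (Ideal.Quotient.mk (maximalIdeal R)) (algebraMap K R (kres K R hres r))
      = algebraMap K (R ⧸ maximalIdeal R) (kres K R hres r) := by
    rw [← Ideal.Quotient.algebraMap_eq, ← IsScalarTower.algebraMap_apply]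
  rw [h1, kres]
  exact (RingEquiv.ofBijective _ hres).apply_symm_apply _

lemma sub_kres_mem (hres : Function.Bijective (algebraMap K (R ⧸ maximalIdeal R))) (r : R) :
    r - algebraMap K R (kres K R hres r) ∈ maximalIdeal R := by
  have := Ideal.Quotient.eq.mp (mk_kres K R hres r)
  have h2 : r - algebraMap K R (kres K R hres r)
      = -(algebraMap K R (kres K R hres r) - r) := by ring
  rw [h2]
  exact neg_mem this

lemma pi_algebraMap (hres : Function.Bijective (algebraMap K (R ⧸ maximalIdeal R)))
    (π : A →ₐ[K] C)
    (hker : ∀ a : A, π a = 0 ↔ a ∈ (maximalIdeal R • ⊤ : Submodule R A)) (r : R) :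
    π (algebraMap R A r) = algebraMap K C (kres K R hres r) := by
  have hm := sub_kres_mem K R hres r
  have h0 : π (algebraMap R A (r - algebraMap K R (kres K R hres r))) = 0 := by
    apply (hker _).2
    rw [Algebra.algebraMap_eq_smul_one]
    exact Submodule.smul_mem_smul hm Submodule.mem_top
  have hsplit : algebraMap R A r
      = algebraMap R A (r - algebraMap K R (kres K R hres r))
        + algebraMap R A (algebraMap K R (kres K R hres r)) := by
    rw [← map_add, sub_add_cancel]
  rw [hsplit, map_add, h0, zero_add, ← IsScalarTower.algebraMap_apply, AlgHom.commutes]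

lemma pi_smul (hres : Function.Bijective (algebraMap K (R ⧸ maximalIdeal R)))
    (π : A →ₐ[K] C)
    (hker : ∀ a : A, π a = 0 ↔ a ∈ (maximalIdeal R • ⊤ : Submodule R A)) (r : R) (a : A) :
    π (r • a) = kres K R hres r • π a := by
  rw [Algebra.smul_def, map_mul, pi_algebraMap K R C A hres π hker, Algebra.smul_def]

/-- The reduction map `R/𝔪^{i+2} → R/𝔪^{i+1}` (first factor of `tensorTransition`). -/
noncomputable def qred (i : ℕ) :
    (R ⧸ maximalIdeal R ^ (i + 1 + 1)) →ₐ[K] (R ⧸ maximalIdeal R ^ (i + 1)) :=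
  Ideal.Quotient.liftₐ (maximalIdeal R ^ (i + 1 + 1))
    (Ideal.Quotient.mkₐ K (maximalIdeal R ^ (i + 1)))
    (fun a ha => by
      rw [Ideal.Quotient.mkₐ_eq_mk, Ideal.Quotient.eq_zero_iff_mem]
      exact Ideal.pow_le_pow_right (Nat.le_succ _) ha)

@[simp] lemma qred_mk (i : ℕ) (r : R) :
    qred K R i (Ideal.Quotient.mk (maximalIdeal R ^ (i + 1 + 1)) r)
      = Ideal.Quotient.mk (maximalIdeal R ^ (i + 1)) r := by
  simp [qred]
  rfl

lemma tensorTransition_eq (i : ℕ) (x : TensorLevel K R C (i+1)) :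
    tensorTransition K R C i x = LinearMap.rTensor C (qred K R i).toLinearMap x := by
  induction x using TensorProduct.induction_on with
  | zero => simp
  | tmul w c =>
    obtain ⟨r, rfl⟩ := Ideal.Quotient.mk_surjective w
    rw [tensorTransition_tmul, LinearMap.rTensor_tmul]
    simp
  | add x y hx hy => simp only [map_add, hx, hy]

/-- Inclusion of `𝔪^{i+1}` into the kernel of `qred`. -/
noncomputable def toker (i : ℕ) (m : (maximalIdeal R ^ (i+1) : Ideal R)) :
    LinearMap.ker (qred K R i).toLinearMap :=
  ⟨Ideal.Quotient.mk (maximalIdeal R ^ (i + 1 + 1)) (m : R), by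
    simp only [LinearMap.mem_ker, AlgHom.toLinearMap_apply, qred_mk]
    rw [Ideal.Quotient.eq_zero_iff_mem]
    exact m.2⟩

lemma toker_smul (hres : Function.Bijective (algebraMap K (R ⧸ maximalIdeal R)))
    (i : ℕ) (r : R) (m : (maximalIdeal R ^ (i+1) : Ideal R)) :
    toker K R i (r • m) = kres K R hres r • toker K R i m := by
  apply Subtype.ext
  show Ideal.Quotient.mk (maximalIdeal R ^ (i + 1 + 1)) (r * (m : R))
      = kres K R hres r • Ideal.Quotient.mk (maximalIdeal R ^ (i + 1 + 1)) (m : R)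
  have h2 : algebraMap K (R ⧸ maximalIdeal R ^ (i+1+1)) (kres K R hres r)
      = Ideal.Quotient.mk (maximalIdeal R ^ (i+1+1)) (algebraMap K R (kres K R hres r)) := by
    rw [← Ideal.Quotient.algebraMap_eq, ← IsScalarTower.algebraMap_apply]
  rw [Algebra.smul_def, h2, ← map_mul]
  rw [Ideal.Quotient.eq]
  have : r * (m : R) - algebraMap K R (kres K R hres r) * (m : R)
      = (r - algebraMap K R (kres K R hres r)) * (m : R) := by ring
  rw [this, pow_succ']
  exact Ideal.mul_mem_mul (sub_kres_mem K R hres r) m.2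

end Aux3

section Aux4
variable (A : Type) [CommRing A] [Algebra K A] [Algebra R A] [IsScalarTower K R A]

/-- The multiplication map `𝔪^{i+1} ⊗_R A → A`. -/
noncomputable def theta (i : ℕ) :
    ((maximalIdeal R ^ (i+1) : Ideal R) ⊗[R] A) →ₗ[R] A :=
  (TensorProduct.lid R A).toLinearMap ∘ₗ
    LinearMap.rTensor A (Submodule.subtype (maximalIdeal R ^ (i+1) : Ideal R))

@[simp] lemma theta_tmul (i : ℕ) (m : (maximalIdeal R ^ (i+1) : Ideal R)) (a : A) :
    theta R A i (m ⊗ₜ[R] a) = (m : R) • a := by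
  simp [theta]

lemma theta_injective (hflat : Module.Flat R A) (i : ℕ) :
    Function.Injective (theta R A i) := by
  haveI := hflat
  have h := Module.Flat.rTensor_preserves_injective_linearMap (M := A)
    (Submodule.subtype (maximalIdeal R ^ (i+1) : Ideal R)) (Submodule.injective_subtype _)
  unfold theta
  rw [LinearMap.coe_comp]
  exact (TensorProduct.lid R A).injective.comp h

noncomputable def iota2 (i : ℕ) :
    ((maximalIdeal R ^ (i+1+1) : Ideal R) ⊗[R] A) →ₗ[R]
      ((maximalIdeal R ^ (i+1) : Ideal R) ⊗[R] A) :=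
  LinearMap.rTensor A (Submodule.inclusion (Ideal.pow_le_pow_right (Nat.le_succ _)))

noncomputable def rho (hres : Function.Bijective (algebraMap K (R ⧸ maximalIdeal R)))
    (π : A →ₐ[K] C)
    (hker : ∀ a : A, π a = 0 ↔ a ∈ (maximalIdeal R • ⊤ : Submodule R A)) (i : ℕ) :
    ((maximalIdeal R ^ (i+1) : Ideal R) ⊗[R] A) →+
      ((LinearMap.ker (qred K R i).toLinearMap) ⊗[K] C) :=
  TensorProduct.liftAddHom
    (AddMonoidHom.mk' (fun m => AddMonoidHom.mk' (fun a => toker K R i m ⊗ₜ[K] π a)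
        (fun a b => by rw [map_add, tmul_add]))
      (fun m m' => by
        ext a
        show toker K R i (m + m') ⊗ₜ[K] π a
          = toker K R i m ⊗ₜ[K] π a + toker K R i m' ⊗ₜ[K] π a
        have habb : toker K R i (m + m') = toker K R i m + toker K R i m' := by
          apply Subtype.ext
          show Ideal.Quotient.mk (maximalIdeal R ^ (i+1+1)) ((m + m' : _) : R)
            = (toker K R i m + toker K R i m' : _)
          rw [Submodule.coe_add, map_add]
          rfl
        rw [habb, add_tmul]))
    (fun r m a => by
      show toker K R i (r • m) ⊗ₜ[K] π a = toker K R i m ⊗ₜ[K] π (r • a)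
      rw [toker_smul K R hres i r m, pi_smul K R C A hres π hker r a, smul_tmul])

@[simp] lemma rho_tmul (hres : Function.Bijective (algebraMap K (R ⧸ maximalIdeal R)))
    (π : A →ₐ[K] C)
    (hker : ∀ a : A, π a = 0 ↔ a ∈ (maximalIdeal R • ⊤ : Submodule R A)) (i : ℕ)
    (m : (maximalIdeal R ^ (i+1) : Ideal R)) (a : A) :
    rho K R C A hres π hker i (m ⊗ₜ[R] a) = toker K R i m ⊗ₜ[K] π a := rfl

lemma rho_iota2 (hres : Function.Bijective (algebraMap K (R ⧸ maximalIdeal R)))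
    (π : A →ₐ[K] C)
    (hker : ∀ a : A, π a = 0 ↔ a ∈ (maximalIdeal R • ⊤ : Submodule R A)) (i : ℕ)
    (u : ((maximalIdeal R ^ (i+1+1) : Ideal R) ⊗[R] A)) :
    rho K R C A hres π hker i (iota2 R A i u) = 0 := by
  induction u using TensorProduct.induction_on with
  | zero => simp
  | tmul m a =>
    rw [iota2, LinearMap.rTensor_tmul, rho_tmul]
    have : toker K R i (Submodule.inclusion (Ideal.pow_le_pow_right (Nat.le_succ _)) m) = 0 := by
      apply Subtype.ext
      show Ideal.Quotient.mk _ ((m : R)) = 0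
      rw [Ideal.Quotient.eq_zero_iff_mem]
      exact m.2
    rw [this, zero_tmul]
  | add u v hu hv => rw [map_add, map_add, hu, hv, add_zero]

lemma mem_smul_exists (i : ℕ) (z : A)
    (hz : z ∈ (maximalIdeal R ^ (i+1+1) • ⊤ : Submodule R A)) :
    ∃ u, theta R A i (iota2 R A i u) = z := by
  refine Submodule.smul_induction_on hz ?_ ?_
  · intro r hr a _
    refine ⟨(⟨r, hr⟩ : (maximalIdeal R ^ (i+1+1) : Ideal R)) ⊗ₜ[R] a, ?_⟩
    rw [iota2, LinearMap.rTensor_tmul, theta_tmul]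
    rfl
  · rintro x y ⟨u, hu⟩ ⟨v, hv⟩
    exact ⟨u + v, by rw [map_add, map_add, hu, hv]⟩

lemma Phi_ker_injective (hflat : Module.Flat R A)
    (hres : Function.Bijective (algebraMap K (R ⧸ maximalIdeal R)))
    (π : A →ₐ[K] C)
    (hker : ∀ a : A, π a = 0 ↔ a ∈ (maximalIdeal R • ⊤ : Submodule R A))
    (σs : ∀ i, C →ₐ[K] A ⧸ Jid R A i)
    (hs : ∀ i c (a : A), mkB K R A i a = σs i c → π a = c) (i : ℕ)
    (y : (LinearMap.ker (qred K R i).toLinearMap) ⊗[K] C)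
    (hy : Phi K R C A σs (i+1)
      (LinearMap.rTensor C (LinearMap.ker (qred K R i).toLinearMap).subtype y) = 0) :
    y = 0 := by
  have main : ∀ y : (LinearMap.ker (qred K R i).toLinearMap) ⊗[K] C,
      ∃ w, mkB K R A (i+1) (theta R A i w)
          = Phi K R C A σs (i+1)
              (LinearMap.rTensor C (LinearMap.ker (qred K R i).toLinearMap).subtype y)
        ∧ rho K R C A hres π hker i w = y := by
    intro y
    induction y using TensorProduct.induction_on with
    | zero => exact ⟨0, by simp, by simp⟩
    | tmul x c =>
      obtain ⟨x, hx⟩ := x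
      obtain ⟨r, rfl⟩ := Ideal.Quotient.mk_surjective x
      have hmem : r ∈ maximalIdeal R ^ (i+1) := by
        have h' := hx
        simp only [LinearMap.mem_ker, AlgHom.toLinearMap_apply, qred_mk] at h'
        rwa [Ideal.Quotient.eq_zero_iff_mem] at h'
      obtain ⟨a, ha⟩ : ∃ a, mkB K R A (i+1) a = σs (i+1) c := Ideal.Quotient.mk_surjective _
      refine ⟨(⟨r, hmem⟩ : (maximalIdeal R ^ (i+1) : Ideal R)) ⊗ₜ[R] a, ?_, ?_⟩
      · rw [theta_tmul, LinearMap.rTensor_tmul]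
        show mkB K R A (i+1) (r • a)
          = Phi K R C A σs (i+1) ((Ideal.Quotient.mk (maximalIdeal R ^ (i+1+1)) r) ⊗ₜ[K] c)
        rw [Phi_tmul, Algebra.smul_def, map_mul, ha]
      · rw [rho_tmul, hs (i+1) c a ha]
        congr 1
    | add u v hu hv =>
      obtain ⟨w, h1, h2⟩ := hu
      obtain ⟨w', h1', h2'⟩ := hv
      exact ⟨w + w', by simp only [map_add, h1, h1'],
        by simp only [map_add, h2, h2']⟩
  obtain ⟨w, h1, h2⟩ := main y
  rw [hy] at h1
  have hmem2 : theta R A i w ∈ (maximalIdeal R ^ (i+1+1) • ⊤ : Submodule R A) := by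
    rw [← mem_Jid_iff]
    have : mkB K R A (i+1) (theta R A i w) = 0 := h1
    simp only [mkB, Ideal.Quotient.mkₐ_eq_mk, Ideal.Quotient.eq_zero_iff_mem] at this
    exact this
  obtain ⟨u, hu⟩ := mem_smul_exists R A i _ hmem2
  have hw : iota2 R A i u = w := theta_injective R A hflat i hu
  rw [← h2, ← hw, rho_iota2]

noncomputable def piBar (π : A →ₐ[K] C)
    (hker : ∀ a : A, π a = 0 ↔ a ∈ (maximalIdeal R • ⊤ : Submodule R A)) :
    (A ⧸ Jid R A 0) →ₐ[K] C :=
  Ideal.Quotient.liftₐ _ π (fun a ha => by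
    apply (hker a).2
    have := (mem_Jid_iff R A 0 a).mp ha
    simpa using this)

@[simp] lemma piBar_mk (π : A →ₐ[K] C)
    (hker : ∀ a : A, π a = 0 ↔ a ∈ (maximalIdeal R • ⊤ : Submodule R A)) (a : A) :
    piBar K R C A π hker (mkB K R A 0 a) = π a := by
  simp [piBar, mkB]
  rfl

lemma Phi_zero_injective (hres : Function.Bijective (algebraMap K (R ⧸ maximalIdeal R)))
    (π : A →ₐ[K] C)
    (hker : ∀ a : A, π a = 0 ↔ a ∈ (maximalIdeal R • ⊤ : Submodule R A))
    (σs : ∀ i, C →ₐ[K] A ⧸ Jid R A i)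
    (hs0 : ∀ c (a : A), mkB K R A 0 a = σs 0 c → π a = c) :
    Function.Injective (Phi K R C A σs 0) := by
  have hpb : ∀ c : C, piBar K R C A π hker (σs 0 c) = c := by
    intro c
    obtain ⟨a, ha⟩ : ∃ a, mkB K R A 0 a = σs 0 c := Ideal.Quotient.mk_surjective _
    rw [← ha, piBar_mk]
    exact hs0 c a ha
  have key : ∀ x : TensorLevel K R C 0,
      (Algebra.TensorProduct.includeRight : C →ₐ[K] TensorLevel K R C 0)
        (piBar K R C A π hker (Phi K R C A σs 0 x)) = x := by
    intro x
    induction x using TensorProduct.induction_on with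
    | zero => simp
    | tmul w c =>
      obtain ⟨r, rfl⟩ := Ideal.Quotient.mk_surjective w
      rw [Phi_tmul, map_mul, piBar_mk, hpb, pi_algebraMap K R C A hres π hker, map_mul]
      show ((1 : R ⧸ maximalIdeal R ^ (0+1)) ⊗ₜ[K] algebraMap K C (kres K R hres r))
          * ((1 : R ⧸ maximalIdeal R ^ (0+1)) ⊗ₜ[K] c) = _
      rw [Algebra.TensorProduct.tmul_mul_tmul, one_mul]
      rw [← Algebra.smul_def, tmul_smul, smul_tmul']
      congr 1
      rw [← Algebra.algebraMap_eq_smul_one]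
      have h1 : algebraMap K (R ⧸ maximalIdeal R ^ (0+1)) (kres K R hres r)
          = Ideal.Quotient.mk (maximalIdeal R ^ (0+1)) (algebraMap K R (kres K R hres r)) := by
        rw [← Ideal.Quotient.algebraMap_eq, ← IsScalarTower.algebraMap_apply]
      rw [h1]
      rw [Ideal.Quotient.eq]
      have : algebraMap K R (kres K R hres r) - r
          = -(r - algebraMap K R (kres K R hres r)) := by ring
      rw [this]
      apply neg_mem
      have := sub_kres_mem K R hres r
      simpa using this
    | add x y hx hy => rw [map_add, map_add, map_add, hx, hy]
  intro x y h
  rw [← key x, ← key y, h]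

lemma Phi_injective (hflat : Module.Flat R A)
    (hres : Function.Bijective (algebraMap K (R ⧸ maximalIdeal R)))
    (π : A →ₐ[K] C)
    (hker : ∀ a : A, π a = 0 ↔ a ∈ (maximalIdeal R • ⊤ : Submodule R A))
    (σs : ∀ i, C →ₐ[K] A ⧸ Jid R A i)
    (hσ : ∀ i c, trB K R A i (σs (i+1) c) = σs i c)
    (hs : ∀ i c (a : A), mkB K R A i a = σs i c → π a = c) :
    ∀ i, Function.Injective (Phi K R C A σs i) := by
  intro i
  induction i with
  | zero => exact Phi_zero_injective K R C A hres π hker σs (hs 0)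
  | succ i ih =>
    have hz : ∀ x : TensorLevel K R C (i+1), Phi K R C A σs (i+1) x = 0 → x = 0 := by
      intro x hx
      have htr : tensorTransition K R C i x = 0 := by
        apply ih
        rw [← Phi_square K R C A σs hσ i x, hx, map_zero, map_zero]
      have hex := Module.Flat.rTensor_exact (R := K) C
        (LinearMap.exact_subtype_ker_map (qred K R i).toLinearMap)
      have hx0 : LinearMap.rTensor C (qred K R i).toLinearMap x = 0 := by
        rw [← tensorTransition_eq, htr]
      obtain ⟨y, hy⟩ := (hex x).mp hx0
      have hy0 : y = 0 := Phi_ker_injective K R C A hflat hres π hker σs hs i y (by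
        rw [hy]; exact hx)
      rw [← hy, hy0, map_zero]
    intro x y h
    rw [← sub_eq_zero]
    apply hz
    rw [map_sub, h, sub_self]

end Aux4

section Aux5
variable (A : Type) [CommRing A] [Algebra K A] [Algebra R A] [IsScalarTower K R A]
variable (hcomp : IsAdicComplete (maximalIdeal R) A)
variable (σs : ∀ i, C →ₐ[K] A ⧸ Jid R A i)
variable (hσ : ∀ i c, trB K R A i (σs (i+1) c) = σs i c)

noncomputable def phiFun (f : ↥(tensorLimit K R C)) : A :=
  (glue_exists K R A hcomp (fun i => Phi K R C A σs i ((f : ∀ i, TensorLevel K R C i) i))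
    (fun i => by rw [Phi_square K R C A σs hσ i, f.2 i])).choose

lemma phiFun_spec (f : ↥(tensorLimit K R C)) (i : ℕ) :
    mkB K R A i (phiFun K R C A hcomp σs hσ f)
      = Phi K R C A σs i ((f : ∀ i, TensorLevel K R C i) i) := by
  have h := (glue_exists K R A hcomp
      (fun i => Phi K R C A σs i ((f : ∀ i, TensorLevel K R C i) i))
      (fun i => by rw [Phi_square K R C A σs hσ i, f.2 i])).choose_spec
  exact h i

lemma phiFun_one : phiFun K R C A hcomp σs hσ 1 = 1 := by
  apply unique_of_mkB K R A hcomp.toIsHausdorff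
  intro i
  rw [phiFun_spec, map_one]
  have h1 : ((1 : ↥(tensorLimit K R C)) : ∀ i, TensorLevel K R C i) i = 1 := rfl
  rw [h1, map_one]

lemma phiFun_zero : phiFun K R C A hcomp σs hσ 0 = 0 := by
  apply unique_of_mkB K R A hcomp.toIsHausdorff
  intro i
  rw [phiFun_spec, map_zero]
  have h1 : ((0 : ↥(tensorLimit K R C)) : ∀ i, TensorLevel K R C i) i = 0 := rfl
  rw [h1, map_zero]

lemma phiFun_mul (x y : ↥(tensorLimit K R C)) :
    phiFun K R C A hcomp σs hσ (x * y)
      = phiFun K R C A hcomp σs hσ x * phiFun K R C A hcomp σs hσ y := by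
  apply unique_of_mkB K R A hcomp.toIsHausdorff
  intro i
  rw [phiFun_spec, map_mul]
  have h1 : ((x * y : ↥(tensorLimit K R C)) : ∀ i, TensorLevel K R C i) i
      = ((x : ∀ i, TensorLevel K R C i) i) * ((y : ∀ i, TensorLevel K R C i) i) := rfl
  rw [h1, map_mul, ← phiFun_spec K R C A hcomp σs hσ x i, ← phiFun_spec K R C A hcomp σs hσ y i]

lemma phiFun_add (x y : ↥(tensorLimit K R C)) :
    phiFun K R C A hcomp σs hσ (x + y)
      = phiFun K R C A hcomp σs hσ x + phiFun K R C A hcomp σs hσ y := by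
  apply unique_of_mkB K R A hcomp.toIsHausdorff
  intro i
  rw [phiFun_spec, map_add]
  have h1 : ((x + y : ↥(tensorLimit K R C)) : ∀ i, TensorLevel K R C i) i
      = ((x : ∀ i, TensorLevel K R C i) i) + ((y : ∀ i, TensorLevel K R C i) i) := rfl
  rw [h1, map_add, ← phiFun_spec K R C A hcomp σs hσ x i, ← phiFun_spec K R C A hcomp σs hσ y i]

lemma phiFun_injective (hPhiInj : ∀ i, Function.Injective (Phi K R C A σs i)) :
    Function.Injective (phiFun K R C A hcomp σs hσ) := by
  intro x y h
  apply Subtype.ext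
  funext i
  apply hPhiInj i
  rw [← phiFun_spec K R C A hcomp σs hσ x i, ← phiFun_spec K R C A hcomp σs hσ y i]
  exact congrArg (mkB K R A i) h

lemma phiFun_surjective (hPhiInj : ∀ i, Function.Injective (Phi K R C A σs i))
    (hPhiSurj : ∀ i, Function.Surjective (Phi K R C A σs i)) :
    Function.Surjective (phiFun K R C A hcomp σs hσ) := by
  intro a
  have hg : ∀ i, ∃ t, Phi K R C A σs i t = mkB K R A i a := fun i => hPhiSurj i _
  choose g hgspec using hg
  have hmem : ∀ i, tensorTransition K R C i (g (i+1)) = g i := by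
    intro i
    apply hPhiInj i
    rw [← Phi_square K R C A σs hσ i, hgspec (i+1), hgspec i, trB_mk]
  refine ⟨⟨g, hmem⟩, ?_⟩
  apply unique_of_mkB K R A hcomp.toIsHausdorff
  intro i
  rw [phiFun_spec]
  exact hgspec i

lemma phiFun_struct (r : R) :
    phiFun K R C A hcomp σs hσ (tensorLimitStruct K R C r) = algebraMap R A r := by
  apply unique_of_mkB K R A hcomp.toIsHausdorff
  intro i
  rw [phiFun_spec]
  have h1 : ((tensorLimitStruct K R C r : ↥(tensorLimit K R C)) :
      ∀ i, TensorLevel K R C i) i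
      = (Ideal.Quotient.mk (maximalIdeal R ^ (i+1)) r) ⊗ₜ[K] (1 : C) := rfl
  rw [h1, Phi_tmul, map_one, mul_one]

lemma piBar_Phi_zero (hres : Function.Bijective (algebraMap K (R ⧸ maximalIdeal R)))
    (π : A →ₐ[K] C)
    (hker : ∀ a : A, π a = 0 ↔ a ∈ (maximalIdeal R • ⊤ : Submodule R A))
    (hpb : ∀ c : C, piBar K R C A π hker (σs 0 c) = c)
    (t : TensorLevel K R C 0) :
    piBar K R C A π hker (Phi K R C A σs 0 t) = tensorAug K R C hres t := by
  induction t using TensorProduct.induction_on with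
  | zero => simp
  | tmul w c =>
    obtain ⟨r, rfl⟩ := Ideal.Quotient.mk_surjective w
    rw [Phi_tmul, map_mul, piBar_mk, pi_algebraMap K R C A hres π hker, hpb]
    show _ = tensorAug K R C hres
      ((Ideal.Quotient.mk (maximalIdeal R ^ (0+1)) r) ⊗ₜ[K] c)
    rw [tensorAug, Algebra.TensorProduct.productMap_apply_tmul]
    simp [resHom, kres]
  | add x y hx hy => rw [map_add, map_add, map_add, hx, hy]

lemma phiFun_aug (hres : Function.Bijective (algebraMap K (R ⧸ maximalIdeal R)))
    (π : A →ₐ[K] C)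
    (hker : ∀ a : A, π a = 0 ↔ a ∈ (maximalIdeal R • ⊤ : Submodule R A))
    (hpb : ∀ c : C, piBar K R C A π hker (σs 0 c) = c)
    (f : ↥(tensorLimit K R C)) :
    π (phiFun K R C A hcomp σs hσ f)
      = tensorAug K R C hres ((f : ∀ i, TensorLevel K R C i) 0) := by
  calc π (phiFun K R C A hcomp σs hσ f)
      = piBar K R C A π hker (mkB K R A 0 (phiFun K R C A hcomp σs hσ f)) :=
        (piBar_mk K R C A π hker _).symm
    _ = piBar K R C A π hker
          (Phi K R C A σs 0 ((f : ∀ i, TensorLevel K R C i) 0)) := by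
        rw [phiFun_spec]
    _ = tensorAug K R C hres ((f : ∀ i, TensorLevel K R C i) 0) :=
        piBar_Phi_zero K R C A σs hres π hker hpb _

end Aux5

/-- Let `K` be a field of characteristic `0`, `(R, 𝔪)` a parameter `K`-algebra
and `C` a smooth integral commutative `K`-algebra.  Let `(A, {-,-}, π)` be a Poisson
`R`-deformation of `C`.  Then there is an `R`-algebra isomorphism `φ` from the `𝔪`-adic
completion `lim_i (R/𝔪^{i+1}) ⊗_K C` of `R ⊗_K C` onto `A` such that `π ∘ φ` is the canonical
augmentation of the completion. -/
theorem statement13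
    (K : Type) [Field K] [CharZero K]
    (R : Type) [CommRing R] [Algebra K R] [IsNoetherianRing R] [IsLocalRing R]
    (hRcomp : IsAdicComplete (maximalIdeal R) R)
    (hres : Function.Bijective (algebraMap K (R ⧸ maximalIdeal R)))
    (C : Type) [CommRing C] [Algebra K C] [IsDomain C]
    [Algebra.FormallySmooth K C] (hfp : Algebra.FinitePresentation K C)
    -- a Poisson `R`-deformation `(A, {-,-}, π)` of `C`:
    (A : Type) [CommRing A] [Algebra K A] [Algebra R A] [IsScalarTower K R A]
    (hflat : Module.Flat R A) (hcomp : IsAdicComplete (maximalIdeal R) A)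
    (P : A → A → A)
    (haddl : ∀ a b c : A, P (a + b) c = P a c + P b c)
    (haddr : ∀ a b c : A, P a (b + c) = P a b + P a c)
    (hsmull : ∀ (r : R) (a b : A), P (r • a) b = r • P a b)
    (hsmulr : ∀ (r : R) (a b : A), P a (r • b) = r • P a b)
    (hanti : ∀ a b : A, P a b = - P b a)
    (hjac : ∀ a b c : A, P a (P b c) + P b (P c a) + P c (P a b) = 0)
    (hleibl : ∀ a b c : A, P (a * b) c = P a c * b + a * P b c)
    (hleibr : ∀ a b c : A, P a (b * c) = P a b * c + b * P a c)
    (π : A →ₐ[K] C)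
    (hsurj : Function.Surjective π)
    (hker : ∀ a : A, π a = 0 ↔ a ∈ (maximalIdeal R • ⊤ : Submodule R A))
    (hP0 : ∀ a b : A, π (P a b) = 0) :
    ∃ φ : ↥(tensorLimit K R C) →+* A,
      Function.Bijective φ ∧
      (∀ r : R, φ (tensorLimitStruct K R C r) = algebraMap R A r) ∧
      (∀ f : ↥(tensorLimit K R C),
        π (φ f) = tensorAug K R C hres ((f : ∀ i, TensorLevel K R C i) 0)) := by
    classical
  haveI := hflat
  have hpbBij : Function.Bijective (piBar K R C A π hker) := by
    constructor
    · intro x y hxy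
      obtain ⟨a, rfl⟩ : ∃ a, mkB K R A 0 a = x := Ideal.Quotient.mk_surjective x
      obtain ⟨b, rfl⟩ : ∃ b, mkB K R A 0 b = y := Ideal.Quotient.mk_surjective y
      rw [piBar_mk, piBar_mk] at hxy
      have hmem : a - b ∈ Jid R A 0 := by
        rw [mem_Jid_iff]
        have : π (a - b) = 0 := by rw [map_sub, hxy, sub_self]
        have h2 := (hker _).1 this
        simpa using h2
      show Ideal.Quotient.mk (Jid R A 0) a = Ideal.Quotient.mk (Jid R A 0) b
      exact Ideal.Quotient.eq.mpr hmem
    · intro c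
      obtain ⟨a, ha⟩ := hsurj c
      exact ⟨mkB K R A 0 a, by rw [piBar_mk, ha]⟩
  set σ₀ : C →ₐ[K] A ⧸ Jid R A 0 :=
    (AlgEquiv.ofBijective (piBar K R C A π hker) hpbBij).symm.toAlgHom with hσ₀
  set σs : ∀ i, C →ₐ[K] A ⧸ Jid R A i := sigmaTower K R C σ₀ with hσs
  have hσ : ∀ i c, trB K R A i (σs (i+1) c) = σs i c := sigmaTower_compat K R C σ₀
  have hσzero : ∀ c, σs 0 c = σ₀ c := fun c => rfl
  have hpb : ∀ c : C, piBar K R C A π hker (σs 0 c) = c := by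
    intro c
    rw [hσzero c]
    show piBar K R C A π hker
      ((AlgEquiv.ofBijective (piBar K R C A π hker) hpbBij).symm c) = c
    have h1 := (AlgEquiv.ofBijective (piBar K R C A π hker) hpbBij).apply_symm_apply c
    rwa [AlgEquiv.coe_ofBijective] at h1
  have hs : ∀ i c (a : A), mkB K R A i a = σs i c → π a = c := by
    intro i c a ha
    have h0 : mkB K R A 0 a = σs 0 c :=
      mkB_compat K R A (fun j => σs j c) (fun j => hσ j c) i 0 (Nat.zero_le i) a ha
    calc π a = piBar K R C A π hker (mkB K R A 0 a) := (piBar_mk K R C A π hker a).symm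
      _ = piBar K R C A π hker (σs 0 c) := by rw [h0]
      _ = c := hpb c
  have hPhiInj : ∀ i, Function.Injective (Phi K R C A σs i) :=
    Phi_injective K R C A hflat hres π hker σs hσ hs
  have hPhiSurj : ∀ i, Function.Surjective (Phi K R C A σs i) :=
    Phi_surjective K R C A σs π hker hs
  refine ⟨{ toFun := phiFun K R C A hcomp σs hσ,
            map_one' := phiFun_one K R C A hcomp σs hσ,
            map_mul' := phiFun_mul K R C A hcomp σs hσ,
            map_zero' := phiFun_zero K R C A hcomp σs hσ,
            map_add' := phiFun_add K R C A hcomp σs hσ },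
    ⟨phiFun_injective K R C A hcomp σs hσ hPhiInj,
     phiFun_surjective K R C A hcomp σs hσ hPhiInj hPhiSurj⟩,
    phiFun_struct K R C A hcomp σs hσ,
    phiFun_aug K R C A hcomp σs hσ hres π hker hpb⟩
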